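/- Let L > 0, Δt > 0 and N be a positive integer, and fix positive constants ρ, α, λ, μ, ρ₁, K, γ, b, ρ₃, δ, κ and a nonzero constant β. For n = 0,…,N let uⁿ, φⁿ, ψⁿ, wⁿ, ξⁿ, Φⁿ, ϑⁿ be C¹ functions on [0,L] vanishing at x=0 and x=L, satisfying for each n = 1,…,N the update rules uⁿ = uⁿ⁻¹ + Δt ξⁿ, φⁿ = φⁿ⁻¹ + Δt Φⁿ, wⁿ = wⁿ⁻¹ + Δt ϑⁿ, and set Ψⁿ = (ψⁿ − ψⁿ⁻¹)/Δt. Assume that for each n = 1,…,N the following identities hold, where (f,g) = ∫₀^L f g dx and ‖·‖ is the L²(0,L) norm: (a) (ρ/Δt)(ξⁿ−ξⁿ⁻¹, ξⁿ) + α(u_xⁿ, ξ_xⁿ) − λ(φⁿ−uⁿ, ξⁿ) + μ‖ξⁿ‖² = 0; (b) (ρ₁/Δt)(Φⁿ−Φⁿ⁻¹, Φⁿ) + K(φ_xⁿ+ψⁿ, Φ_xⁿ) + λ(φⁿ−uⁿ, Φⁿ) + γ‖Φⁿ‖² + β(ϑ_xⁿ, Φⁿ) = 0; (c) b(ψ_xⁿ,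 Ψ_xⁿ) + K(φ_xⁿ+ψⁿ, Ψⁿ) = 0; (d) (ρ₃/Δt)(ϑⁿ−ϑⁿ⁻¹, ϑⁿ) + δ(w_xⁿ, ϑ_xⁿ) + β(Φ_xⁿ, ϑⁿ) + κ‖ϑ_xⁿ‖² = 0. Define the discrete energy Eⁿ = (1/2)( ρ‖ξⁿ‖² + α‖u_xⁿ‖² + λ‖φⁿ−uⁿ‖² + ρ₁‖Φⁿ‖² + K‖φ_xⁿ+ψⁿ‖² + b‖ψ_xⁿ‖² + ρ₃‖ϑⁿ‖² + δ‖w_xⁿ‖² ). Then Eⁿ ≤ Eⁿ⁻¹ for all n = 1,…,N. -/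

import Mathlib

open MeasureTheory Set

noncomputable section

lemma pairIneq (L : ℝ) (hL : 0 ≤ L) (f g : ℝ → ℝ) (hf : Continuous f) (hg : Continuous g) :
    (∫ x in (0:ℝ)..L, (f x)^2) - (∫ x in (0:ℝ)..L, (g x)^2)
      ≤ 2 * ∫ x in (0:ℝ)..L, (f x - g x) * f x := by
  have hif : IntervalIntegrable (fun x => (f x)^2) volume 0 L :=
    (hf.pow 2).intervalIntegrable 0 L
  have hig : IntervalIntegrable (fun x => (g x)^2) volume 0 L :=
    (hg.pow 2).intervalIntegrable 0 L
  have hifg : IntervalIntegrable (fun x => (f x - g x)^2) volume 0 L :=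
    ((hf.sub hg).pow 2).intervalIntegrable 0 L
  have key : (2:ℝ) * ∫ x in (0:ℝ)..L, (f x - g x) * f x
      = ((∫ x in (0:ℝ)..L, (f x)^2) - (∫ x in (0:ℝ)..L, (g x)^2))
        + ∫ x in (0:ℝ)..L, (f x - g x)^2 := by
    rw [← intervalIntegral.integral_sub hif hig,
      ← intervalIntegral.integral_add (hif.sub hig) hifg,
      ← intervalIntegral.integral_const_mul]
    exact intervalIntegral.integral_congr fun x _ => by ring
  have hnn : 0 ≤ ∫ x in (0:ℝ)..L, (f x - g x)^2 :=
    intervalIntegral.integral_nonneg hL fun x _ => sq_nonneg _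
  linarith

lemma ibpZero (L : ℝ) (f g : ℝ → ℝ) (hf : ContDiff ℝ 1 f) (hg : ContDiff ℝ 1 g)
    (h0 : f 0 * g 0 = 0) (hLv : f L * g L = 0) :
    (∫ x in (0:ℝ)..L, deriv f x * g x) + (∫ x in (0:ℝ)..L, deriv g x * f x) = 0 := by
  have hdf : Differentiable ℝ f := hf.differentiable one_ne_zero
  have hdg : Differentiable ℝ g := hg.differentiable one_ne_zero
  have hcdf : Continuous (deriv f) := hf.continuous_deriv le_rfl
  have hcdg : Continuous (deriv g) := hg.continuous_deriv le_rfl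
  have hd : ∀ x, deriv (fun y => f y * g y) x = deriv f x * g x + f x * deriv g x :=
    fun x => deriv_fun_mul (hdf x) (hdg x)
  have hcont : Continuous (fun x => deriv f x * g x + f x * deriv g x) :=
    (hcdf.mul hg.continuous).add (hf.continuous.mul hcdg)
  have hint : (∫ x in (0:ℝ)..L, (deriv f x * g x + f x * deriv g x))
      = f L * g L - f 0 * g 0 := by
    have h1 : (∫ x in (0:ℝ)..L, deriv (fun y => f y * g y) x)
        = f L * g L - f 0 * g 0 :=
      intervalIntegral.integral_deriv_eq_sub (fun x _ => (hdf x).mul (hdg x))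
        (by
          have he : deriv (fun y => f y * g y)
              = fun x => deriv f x * g x + f x * deriv g x := funext hd
          rw [he]; exact hcont.intervalIntegrable 0 L)
    rw [← h1]
    exact intervalIntegral.integral_congr fun x _ => (hd x).symm
  have hsplit : (∫ x in (0:ℝ)..L, (deriv f x * g x + f x * deriv g x))
      = (∫ x in (0:ℝ)..L, deriv f x * g x) + (∫ x in (0:ℝ)..L, f x * deriv g x) :=
    intervalIntegral.integral_add ((hcdf.mul hg.continuous).intervalIntegrable 0 L)
      ((hf.continuous.mul hcdg).intervalIntegrable 0 L)
  have hcomm : (∫ x in (0:ℝ)..L, f x * deriv g x)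
      = ∫ x in (0:ℝ)..L, deriv g x * f x :=
    intervalIntegral.integral_congr fun x _ => mul_comm _ _
  rw [← hcomm]
  rw [hsplit, h0, hLv] at hint
  linarith

lemma derivAffine {a bf : ℝ → ℝ} (ha : Differentiable ℝ a) (hb : Differentiable ℝ bf)
    (c x : ℝ) :
    deriv (fun y => a y + c * bf y) x = deriv a x + c * deriv bf x := by
  rw [deriv_fun_add (ha x) ((hb x).const_mul c), deriv_const_mul c (hb x)]

lemma derivSubDiv {a bf : ℝ → ℝ} (ha : Differentiable ℝ a) (hb : Differentiable ℝ bf)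
    (c x : ℝ) :
    deriv (fun y => (a y - bf y) / c) x = (deriv a x - deriv bf x) / c := by
  simp only [div_eq_mul_inv]
  rw [deriv_mul_const (c := fun y => a y - bf y) ((ha x).sub (hb x)), deriv_fun_sub (ha x) (hb x)]

/-- The discrete energy of the fully discrete scheme. -/
def discEnergy (L ρ α lm ρ₁ K b ρ₃ δ : ℝ) (u φ ψ w ξ Φ ϑ : ℕ → ℝ → ℝ) (n : ℕ) : ℝ :=
  (1/2) * (ρ * (∫ x in (0:ℝ)..L, (ξ n x)^2)
    + α * (∫ x in (0:ℝ)..L, (deriv (u n) x)^2)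
    + lm * (∫ x in (0:ℝ)..L, (φ n x - u n x)^2)
    + ρ₁ * (∫ x in (0:ℝ)..L, (Φ n x)^2)
    + K * (∫ x in (0:ℝ)..L, (deriv (φ n) x + ψ n x)^2)
    + b * (∫ x in (0:ℝ)..L, (deriv (ψ n) x)^2)
    + ρ₃ * (∫ x in (0:ℝ)..L, (ϑ n x)^2)
    + δ * (∫ x in (0:ℝ)..L, (deriv (w n) x)^2))

set_option maxHeartbeats 2000000 in
/-- discrete energy decay for the implicit Euler / finite element scheme. -/
theorem discrete_energy_decay
    {L Δt ρ α lm μ ρ₁ K γ b ρ₃ δ κ β : ℝ} {N : ℕ}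
    (hL : 0 < L) (hΔt : 0 < Δt) (hN : 0 < N)
    (hρ : 0 < ρ) (hα : 0 < α) (hlm : 0 < lm) (hμ : 0 < μ)
    (hρ₁ : 0 < ρ₁) (hK : 0 < K) (hγ : 0 < γ) (hbb : 0 < b) (hρ₃ : 0 < ρ₃)
    (hδ : 0 < δ) (hκ : 0 < κ) (hβ : β ≠ 0)
    (u φ ψ w ξ Φ ϑ : ℕ → ℝ → ℝ)
    (hreg : ∀ n ≤ N, ContDiff ℝ 1 (u n) ∧ ContDiff ℝ 1 (φ n) ∧ ContDiff ℝ 1 (ψ n)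
      ∧ ContDiff ℝ 1 (w n) ∧ ContDiff ℝ 1 (ξ n) ∧ ContDiff ℝ 1 (Φ n)
      ∧ ContDiff ℝ 1 (ϑ n))
    (hbc : ∀ n ≤ N,
      u n 0 = 0 ∧ u n L = 0 ∧ φ n 0 = 0 ∧ φ n L = 0 ∧ ψ n 0 = 0 ∧ ψ n L = 0 ∧
      w n 0 = 0 ∧ w n L = 0 ∧ ξ n 0 = 0 ∧ ξ n L = 0 ∧ Φ n 0 = 0 ∧ Φ n L = 0 ∧
      ϑ n 0 = 0 ∧ ϑ n L = 0)
    (hup : ∀ n : ℕ, 1 ≤ n → n ≤ N → ∀ x : ℝ,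
      u n x = u (n-1) x + Δt * ξ n x ∧
      φ n x = φ (n-1) x + Δt * Φ n x ∧
      w n x = w (n-1) x + Δt * ϑ n x)
    (hA : ∀ n : ℕ, 1 ≤ n → n ≤ N →
      ρ / Δt * (∫ x in (0:ℝ)..L, (ξ n x - ξ (n-1) x) * ξ n x)
        + α * (∫ x in (0:ℝ)..L, deriv (u n) x * deriv (ξ n) x)
        - lm * (∫ x in (0:ℝ)..L, (φ n x - u n x) * ξ n x)
        + μ * (∫ x in (0:ℝ)..L, (ξ n x)^2) = 0)
    (hB : ∀ n : ℕ, 1 ≤ n → n ≤ N →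
      ρ₁ / Δt * (∫ x in (0:ℝ)..L, (Φ n x - Φ (n-1) x) * Φ n x)
        + K * (∫ x in (0:ℝ)..L, (deriv (φ n) x + ψ n x) * deriv (Φ n) x)
        + lm * (∫ x in (0:ℝ)..L, (φ n x - u n x) * Φ n x)
        + γ * (∫ x in (0:ℝ)..L, (Φ n x)^2)
        + β * (∫ x in (0:ℝ)..L, deriv (ϑ n) x * Φ n x) = 0)
    (hC : ∀ n : ℕ, 1 ≤ n → n ≤ N →
      b * (∫ x in (0:ℝ)..L,
            deriv (ψ n) x * deriv (fun y => (ψ n y - ψ (n-1) y) / Δt) x)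
        + K * (∫ x in (0:ℝ)..L,
            (deriv (φ n) x + ψ n x) * ((ψ n x - ψ (n-1) x) / Δt)) = 0)
    (hD : ∀ n : ℕ, 1 ≤ n → n ≤ N →
      ρ₃ / Δt * (∫ x in (0:ℝ)..L, (ϑ n x - ϑ (n-1) x) * ϑ n x)
        + δ * (∫ x in (0:ℝ)..L, deriv (w n) x * deriv (ϑ n) x)
        + β * (∫ x in (0:ℝ)..L, deriv (Φ n) x * ϑ n x)
        + κ * (∫ x in (0:ℝ)..L, (deriv (ϑ n) x)^2) = 0) :
    ∀ n : ℕ, 1 ≤ n → n ≤ N →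
      discEnergy L ρ α lm ρ₁ K b ρ₃ δ u φ ψ w ξ Φ ϑ n
        ≤ discEnergy L ρ α lm ρ₁ K b ρ₃ δ u φ ψ w ξ Φ ϑ (n-1) := by
  intro n hn1 hnN
  have hΔne : Δt ≠ 0 := ne_of_gt hΔt
  have hmN : n - 1 ≤ N := le_trans (Nat.sub_le n 1) hnN
  obtain ⟨hun, hφn, hψn, hwn, hξn, hΦn, hϑn⟩ := hreg n hnN
  obtain ⟨hum, hφm, hψm, hwm, hξm, hΦm, hϑm⟩ := hreg (n-1) hmN
  -- differentiability / continuity facts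
  have dun : Differentiable ℝ (u n) := hun.differentiable one_ne_zero
  have dum : Differentiable ℝ (u (n-1)) := hum.differentiable one_ne_zero
  have dφn : Differentiable ℝ (φ n) := hφn.differentiable one_ne_zero
  have dφm : Differentiable ℝ (φ (n-1)) := hφm.differentiable one_ne_zero
  have dψn : Differentiable ℝ (ψ n) := hψn.differentiable one_ne_zero
  have dψm : Differentiable ℝ (ψ (n-1)) := hψm.differentiable one_ne_zero
  have dwn : Differentiable ℝ (w n) := hwn.differentiable one_ne_zero
  have dwm : Differentiable ℝ (w (n-1)) := hwm.differentiable one_ne_zero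
  have dξn : Differentiable ℝ (ξ n) := hξn.differentiable one_ne_zero
  have dΦn : Differentiable ℝ (Φ n) := hΦn.differentiable one_ne_zero
  have dϑn : Differentiable ℝ (ϑ n) := hϑn.differentiable one_ne_zero
  have cdun : Continuous (deriv (u n)) := hun.continuous_deriv le_rfl
  have cdum : Continuous (deriv (u (n-1))) := hum.continuous_deriv le_rfl
  have cdφn : Continuous (deriv (φ n)) := hφn.continuous_deriv le_rfl
  have cdφm : Continuous (deriv (φ (n-1))) := hφm.continuous_deriv le_rfl
  have cdψn : Continuous (deriv (ψ n)) := hψn.continuous_deriv le_rfl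
  have cdψm : Continuous (deriv (ψ (n-1))) := hψm.continuous_deriv le_rfl
  have cdwn : Continuous (deriv (w n)) := hwn.continuous_deriv le_rfl
  have cdwm : Continuous (deriv (w (n-1))) := hwm.continuous_deriv le_rfl
  have cdϑn : Continuous (deriv (ϑ n)) := hϑn.continuous_deriv le_rfl
  -- update rules as function equalities
  have hu : u n = fun y => u (n-1) y + Δt * ξ n y :=
    funext fun y => (hup n hn1 hnN y).1
  have hφ : φ n = fun y => φ (n-1) y + Δt * Φ n y :=
    funext fun y => (hup n hn1 hnN y).2.1
  have hw : w n = fun y => w (n-1) y + Δt * ϑ n y :=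
    funext fun y => (hup n hn1 hnN y).2.2
  -- derivative update rules
  have hdu : ∀ x, deriv (u n) x = deriv (u (n-1)) x + Δt * deriv (ξ n) x := by
    intro x; rw [hu]; exact derivAffine dum dξn Δt x
  have hdφ : ∀ x, deriv (φ n) x = deriv (φ (n-1)) x + Δt * deriv (Φ n) x := by
    intro x; rw [hφ]; exact derivAffine dφm dΦn Δt x
  have hdw : ∀ x, deriv (w n) x = deriv (w (n-1)) x + Δt * deriv (ϑ n) x := by
    intro x; rw [hw]; exact derivAffine dwm dϑn Δt x
  -- integral rewriting identities
  have e1 : (∫ x in (0:ℝ)..L, deriv (u n) x * deriv (ξ n) x)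
      = (1/Δt) * ∫ x in (0:ℝ)..L,
          (deriv (u n) x - deriv (u (n-1)) x) * deriv (u n) x := by
    rw [← intervalIntegral.integral_const_mul]
    refine intervalIntegral.integral_congr fun x _ => ?_
    rw [hdu x]; field_simp; ring
  have e5 : (∫ x in (0:ℝ)..L, deriv (w n) x * deriv (ϑ n) x)
      = (1/Δt) * ∫ x in (0:ℝ)..L,
          (deriv (w n) x - deriv (w (n-1)) x) * deriv (w n) x := by
    rw [← intervalIntegral.integral_const_mul]
    refine intervalIntegral.integral_congr fun x _ => ?_
    rw [hdw x]; field_simp; ring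
  have e2 : (∫ x in (0:ℝ)..L, (φ n x - u n x) * Φ n x)
        - (∫ x in (0:ℝ)..L, (φ n x - u n x) * ξ n x)
      = (1/Δt) * ∫ x in (0:ℝ)..L,
          ((φ n x - u n x) - (φ (n-1) x - u (n-1) x)) * (φ n x - u n x) := by
    rw [← intervalIntegral.integral_sub
        (show IntervalIntegrable (fun x => (φ n x - u n x) * Φ n x) volume 0 L from
          ((hφn.continuous.sub hun.continuous).mul hΦn.continuous).intervalIntegrable 0 L)
        (show IntervalIntegrable (fun x => (φ n x - u n x) * ξ n x) volume 0 L from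
          ((hφn.continuous.sub hun.continuous).mul hξn.continuous).intervalIntegrable 0 L),
      ← intervalIntegral.integral_const_mul]
    refine intervalIntegral.integral_congr fun x _ => ?_
    rw [(hup n hn1 hnN x).2.1, (hup n hn1 hnN x).1]; field_simp; ring
  have e3 : (∫ x in (0:ℝ)..L, (deriv (φ n) x + ψ n x) * deriv (Φ n) x)
        + (∫ x in (0:ℝ)..L, (deriv (φ n) x + ψ n x) * ((ψ n x - ψ (n-1) x) / Δt))
      = (1/Δt) * ∫ x in (0:ℝ)..L,
          ((deriv (φ n) x + ψ n x) - (deriv (φ (n-1)) x + ψ (n-1) x))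
            * (deriv (φ n) x + ψ n x) := by
    rw [← intervalIntegral.integral_add
        (show IntervalIntegrable (fun x => (deriv (φ n) x + ψ n x) * deriv (Φ n) x) volume 0 L from
          ((cdφn.add hψn.continuous).mul (hΦn.continuous_deriv le_rfl)).intervalIntegrable 0 L)
        (show IntervalIntegrable
            (fun x => (deriv (φ n) x + ψ n x) * ((ψ n x - ψ (n-1) x) / Δt)) volume 0 L from
          ((cdφn.add hψn.continuous).mul
          (((hψn.continuous.sub hψm.continuous).div_const Δt))).intervalIntegrable 0 L),
      ← intervalIntegral.integral_const_mul]
    refine intervalIntegral.integral_congr fun x _ => ?_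
    rw [hdφ x]; field_simp; ring
  have e4 : (∫ x in (0:ℝ)..L,
        deriv (ψ n) x * deriv (fun y => (ψ n y - ψ (n-1) y) / Δt) x)
      = (1/Δt) * ∫ x in (0:ℝ)..L,
          (deriv (ψ n) x - deriv (ψ (n-1)) x) * deriv (ψ n) x := by
    rw [← intervalIntegral.integral_const_mul]
    refine intervalIntegral.integral_congr fun x _ => ?_
    rw [derivSubDiv dψn dψm Δt x]; field_simp
  have e6 : (∫ x in (0:ℝ)..L, deriv (ϑ n) x * Φ n x)
        + (∫ x in (0:ℝ)..L, deriv (Φ n) x * ϑ n x) = 0 := by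
    have b1 := (hbc n hnN).2.2.2.2.2.2.2.2.2.2.1
    have b2 := (hbc n hnN).2.2.2.2.2.2.2.2.2.2.2.1
    have b3 := (hbc n hnN).2.2.2.2.2.2.2.2.2.2.2.2.1
    have b4 := (hbc n hnN).2.2.2.2.2.2.2.2.2.2.2.2.2
    exact ibpZero L (ϑ n) (Φ n) hϑn hΦn (by rw [b3]; ring) (by rw [b4]; ring)
  -- the four discrete equations
  have EA := hA n hn1 hnN
  have EB := hB n hn1 hnN
  have EC := hC n hn1 hnN
  have ED := hD n hn1 hnN
  -- combined energy identity
  have S : ρ / Δt * (∫ x in (0:ℝ)..L, (ξ n x - ξ (n-1) x) * ξ n x)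
      + α * ((1/Δt) * ∫ x in (0:ℝ)..L,
          (deriv (u n) x - deriv (u (n-1)) x) * deriv (u n) x)
      + lm * ((1/Δt) * ∫ x in (0:ℝ)..L,
          ((φ n x - u n x) - (φ (n-1) x - u (n-1) x)) * (φ n x - u n x))
      + ρ₁ / Δt * (∫ x in (0:ℝ)..L, (Φ n x - Φ (n-1) x) * Φ n x)
      + K * ((1/Δt) * ∫ x in (0:ℝ)..L,
          ((deriv (φ n) x + ψ n x) - (deriv (φ (n-1)) x + ψ (n-1) x))
            * (deriv (φ n) x + ψ n x))
      + b * ((1/Δt) * ∫ x in (0:ℝ)..L,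
          (deriv (ψ n) x - deriv (ψ (n-1)) x) * deriv (ψ n) x)
      + ρ₃ / Δt * (∫ x in (0:ℝ)..L, (ϑ n x - ϑ (n-1) x) * ϑ n x)
      + δ * ((1/Δt) * ∫ x in (0:ℝ)..L,
          (deriv (w n) x - deriv (w (n-1)) x) * deriv (w n) x)
      + μ * (∫ x in (0:ℝ)..L, (ξ n x)^2)
      + γ * (∫ x in (0:ℝ)..L, (Φ n x)^2)
      + κ * (∫ x in (0:ℝ)..L, (deriv (ϑ n) x)^2) = 0 := by
    linear_combination EA + EB + EC + ED - α * e1 - lm * e2 - K * e3 - b * e4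
      - δ * e5 - β * e6
  -- nonnegativity of the dissipation terms
  have hIξ : 0 ≤ ∫ x in (0:ℝ)..L, (ξ n x)^2 :=
    intervalIntegral.integral_nonneg hL.le fun x _ => sq_nonneg _
  have hIΦ : 0 ≤ ∫ x in (0:ℝ)..L, (Φ n x)^2 :=
    intervalIntegral.integral_nonneg hL.le fun x _ => sq_nonneg _
  have hIϑ : 0 ≤ ∫ x in (0:ℝ)..L, (deriv (ϑ n) x)^2 :=
    intervalIntegral.integral_nonneg hL.le fun x _ => sq_nonneg _
  -- pair inequalities
  have pξ : (∫ x in (0:ℝ)..L, (ξ n x)^2) - (∫ x in (0:ℝ)..L, (ξ (n-1) x)^2)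
      ≤ 2 * ∫ x in (0:ℝ)..L, (ξ n x - ξ (n-1) x) * ξ n x :=
    pairIneq L hL.le _ _ hξn.continuous hξm.continuous
  have pu : (∫ x in (0:ℝ)..L, (deriv (u n) x)^2)
      - (∫ x in (0:ℝ)..L, (deriv (u (n-1)) x)^2)
      ≤ 2 * ∫ x in (0:ℝ)..L, (deriv (u n) x - deriv (u (n-1)) x) * deriv (u n) x :=
    pairIneq L hL.le _ _ cdun cdum
  have pl : (∫ x in (0:ℝ)..L, (φ n x - u n x)^2)
      - (∫ x in (0:ℝ)..L, (φ (n-1) x - u (n-1) x)^2)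
      ≤ 2 * ∫ x in (0:ℝ)..L,
          ((φ n x - u n x) - (φ (n-1) x - u (n-1) x)) * (φ n x - u n x) :=
    pairIneq L hL.le _ _ (hφn.continuous.sub hun.continuous)
      (hφm.continuous.sub hum.continuous)
  have pΦ : (∫ x in (0:ℝ)..L, (Φ n x)^2) - (∫ x in (0:ℝ)..L, (Φ (n-1) x)^2)
      ≤ 2 * ∫ x in (0:ℝ)..L, (Φ n x - Φ (n-1) x) * Φ n x :=
    pairIneq L hL.le _ _ hΦn.continuous hΦm.continuous
  have pK : (∫ x in (0:ℝ)..L, (deriv (φ n) x + ψ n x)^2)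
      - (∫ x in (0:ℝ)..L, (deriv (φ (n-1)) x + ψ (n-1) x)^2)
      ≤ 2 * ∫ x in (0:ℝ)..L,
          ((deriv (φ n) x + ψ n x) - (deriv (φ (n-1)) x + ψ (n-1) x))
            * (deriv (φ n) x + ψ n x) :=
    pairIneq L hL.le _ _ (cdφn.add hψn.continuous) (cdφm.add hψm.continuous)
  have pψ : (∫ x in (0:ℝ)..L, (deriv (ψ n) x)^2)
      - (∫ x in (0:ℝ)..L, (deriv (ψ (n-1)) x)^2)
      ≤ 2 * ∫ x in (0:ℝ)..L, (deriv (ψ n) x - deriv (ψ (n-1)) x) * deriv (ψ n) x :=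
    pairIneq L hL.le _ _ cdψn cdψm
  have pϑ : (∫ x in (0:ℝ)..L, (ϑ n x)^2) - (∫ x in (0:ℝ)..L, (ϑ (n-1) x)^2)
      ≤ 2 * ∫ x in (0:ℝ)..L, (ϑ n x - ϑ (n-1) x) * ϑ n x :=
    pairIneq L hL.le _ _ hϑn.continuous hϑm.continuous
  have pw : (∫ x in (0:ℝ)..L, (deriv (w n) x)^2)
      - (∫ x in (0:ℝ)..L, (deriv (w (n-1)) x)^2)
      ≤ 2 * ∫ x in (0:ℝ)..L, (deriv (w n) x - deriv (w (n-1)) x) * deriv (w n) x :=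
    pairIneq L hL.le _ _ cdwn cdwm
  -- scale S by Δt to clear denominators
  have S2 : ρ * (∫ x in (0:ℝ)..L, (ξ n x - ξ (n-1) x) * ξ n x)
      + α * (∫ x in (0:ℝ)..L, (deriv (u n) x - deriv (u (n-1)) x) * deriv (u n) x)
      + lm * (∫ x in (0:ℝ)..L,
          ((φ n x - u n x) - (φ (n-1) x - u (n-1) x)) * (φ n x - u n x))
      + ρ₁ * (∫ x in (0:ℝ)..L, (Φ n x - Φ (n-1) x) * Φ n x)
      + K * (∫ x in (0:ℝ)..L,
          ((deriv (φ n) x + ψ n x) - (deriv (φ (n-1)) x + ψ (n-1) x))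
            * (deriv (φ n) x + ψ n x))
      + b * (∫ x in (0:ℝ)..L, (deriv (ψ n) x - deriv (ψ (n-1)) x) * deriv (ψ n) x)
      + ρ₃ * (∫ x in (0:ℝ)..L, (ϑ n x - ϑ (n-1) x) * ϑ n x)
      + δ * (∫ x in (0:ℝ)..L, (deriv (w n) x - deriv (w (n-1)) x) * deriv (w n) x)
      = - Δt * (μ * (∫ x in (0:ℝ)..L, (ξ n x)^2)
          + γ * (∫ x in (0:ℝ)..L, (Φ n x)^2)
          + κ * (∫ x in (0:ℝ)..L, (deriv (ϑ n) x)^2)) := by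
    field_simp at S ⊢
    linarith [S]
  -- scaled pair inequalities
  have sξ := mul_le_mul_of_nonneg_left pξ hρ.le
  have su := mul_le_mul_of_nonneg_left pu hα.le
  have sl := mul_le_mul_of_nonneg_left pl hlm.le
  have sΦ := mul_le_mul_of_nonneg_left pΦ hρ₁.le
  have sK := mul_le_mul_of_nonneg_left pK hK.le
  have sψ := mul_le_mul_of_nonneg_left pψ hbb.le
  have sϑ := mul_le_mul_of_nonneg_left pϑ hρ₃.le
  have sw := mul_le_mul_of_nonneg_left pw hδ.le
  have hQ : 0 ≤ Δt * (μ * (∫ x in (0:ℝ)..L, (ξ n x)^2)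
      + γ * (∫ x in (0:ℝ)..L, (Φ n x)^2)
      + κ * (∫ x in (0:ℝ)..L, (deriv (ϑ n) x)^2)) :=
    mul_nonneg hΔt.le (by positivity)
  simp only [discEnergy]
  linarith [sξ, su, sl, sΦ, sK, sψ, sϑ, sw, S2, hQ]
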